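/- arXiv:2309.12007 — 6 statements merged into one kernel-verified Lean document; each statement's English description precedes it below -/
import Mathlib

section
/- Let N, N', N'' be submodules of M such that N' ⊆ N'' and N'' is n-comparable with N. Then N + N' is n-comparable with N. -/
/-- The Krull dimension of the support of a module, with `⊥` (i.e. `-∞`)
for the zero module. -/
noncomputable def dimSupp (R : Type*) [CommRing R] (P : Type*) [AddCommGroup P]
    [Module R P] : WithBot (WithTop ℕ) :=
  Order.krullDim (Module.support R P)

/-- Two submodules `N₁, N₂` of `M` are `n`-comparable if the supports of both
`N₁/(N₁ ⊓ N₂)` and `N₂/(N₁ ⊓ N₂)` have Krull dimension `< n`. -/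
def NComparable {R : Type*} [CommRing R] {M : Type*} [AddCommGroup M] [Module R M]
    (n : ℕ) (N₁ N₂ : Submodule R M) : Prop :=
  dimSupp R (N₁ ⧸ ((N₁ ⊓ N₂).comap N₁.subtype)) < (n : WithBot (WithTop ℕ)) ∧
  dimSupp R (N₂ ⧸ ((N₁ ⊓ N₂).comap N₂.subtype)) < (n : WithBot (WithTop ℕ))

lemma krullDim_le_of_subset {α : Type*} [Preorder α] {s t : Set α} (h : s ⊆ t) :
    Order.krullDim s ≤ Order.krullDim t :=
  Order.krullDim_le_of_strictMono (Set.inclusion h) (fun _ _ hlt => hlt)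

lemma dimSupp_le_of_injective {R : Type*} [CommRing R] {P Q : Type*} [AddCommGroup P]
    [Module R P] [AddCommGroup Q] [Module R Q] (f : P →ₗ[R] Q)
    (hf : Function.Injective f) : dimSupp R P ≤ dimSupp R Q :=
  krullDim_le_of_subset (Module.support_subset_of_injective f hf)

lemma dimSupp_eq_of_equiv {R : Type*} [CommRing R] {P Q : Type*} [AddCommGroup P]
    [Module R P] [AddCommGroup Q] [Module R Q] (e : P ≃ₗ[R] Q) :
    dimSupp R P = dimSupp R Q := by
  unfold dimSupp; rw [e.support_eq]

lemma dimSupp_bot_of_subsingleton {R : Type*} [CommRing R] {P : Type*} [AddCommGroup P]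
    [Module R P] [Subsingleton P] : dimSupp R P = ⊥ := by
  unfold dimSupp
  rw [Module.support_eq_empty (R := R) (M := P)]
  exact Order.krullDim_eq_bot

/-- If `N' ⊆ N''` and `N''` is `n`-comparable with `N`, then `N + N'` is
`n`-comparable with `N`. -/
theorem nComparable_sup {R : Type*} [CommRing R] {M : Type*} [AddCommGroup M]
    [Module R M] (n : ℕ) (N N' N'' : Submodule R M) (h₁ : N' ≤ N'')
    (h₂ : NComparable n N'' N) : NComparable n (N ⊔ N') N := by
  constructor
  · -- `(N ⊔ N') / N` embeds (up to iso) in `N'' / (N'' ⊓ N)`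
    have hinf : (N ⊔ N') ⊓ N = N := inf_eq_right.mpr le_sup_left
    set K : Submodule R (N ⊔ N' : Submodule R M) :=
      ((N ⊔ N') ⊓ N).comap (N ⊔ N' : Submodule R M).subtype with hK
    set L : Submodule R N'' := (N'' ⊓ N).comap N''.subtype with hL
    set f : N' →ₗ[R] (N ⊔ N' : Submodule R M) ⧸ K :=
      K.mkQ ∘ₗ Submodule.inclusion le_sup_right with hf
    have hfsurj : Function.Surjective f := by
      intro x
      obtain ⟨y, rfl⟩ := K.mkQ_surjective x
      obtain ⟨a, ha, b, hb, hab⟩ := Submodule.mem_sup.mp y.2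
      refine ⟨⟨b, hb⟩, ?_⟩
      show K.mkQ (Submodule.inclusion le_sup_right ⟨b, hb⟩) = K.mkQ y
      simp only [Submodule.mkQ_apply]
      apply (Submodule.Quotient.eq K).mpr
      rw [hK, Submodule.mem_comap]
      have hval : ((Submodule.inclusion (M := M) le_sup_right ⟨b, hb⟩ -
          y : (N ⊔ N' : Submodule R M)) : M) = -a := by
        simp [Submodule.coe_inclusion, ← hab]
      rw [Submodule.subtype_apply, hval, hinf]
      exact N.neg_mem ha
    set g : N' →ₗ[R] N'' ⧸ L := L.mkQ ∘ₗ Submodule.inclusion h₁ with hg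
    have hker : LinearMap.ker f = LinearMap.ker g := by
      ext x
      simp only [hf, hg, LinearMap.mem_ker, LinearMap.comp_apply, Submodule.mkQ_apply,
        Submodule.Quotient.mk_eq_zero, hK, hL, Submodule.mem_comap,
        Submodule.subtype_apply, Submodule.coe_inclusion, Submodule.mem_inf]
      constructor
      · rintro ⟨-, h⟩; exact ⟨h₁ x.2, h⟩
      · rintro ⟨-, h⟩; exact ⟨Submodule.mem_sup_right x.2, h⟩
    set lift : (N' ⧸ LinearMap.ker f) →ₗ[R] N'' ⧸ L :=
      (LinearMap.ker f).liftQ g (le_of_eq hker) with hlift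
    have hinj : Function.Injective lift := by
      rw [← LinearMap.ker_eq_bot]
      exact Submodule.ker_liftQ_eq_bot' _ _ hker
    calc dimSupp R ((N ⊔ N' : Submodule R M) ⧸ K)
        = dimSupp R (N' ⧸ LinearMap.ker f) :=
          (dimSupp_eq_of_equiv (f.quotKerEquivOfSurjective hfsurj)).symm
      _ ≤ dimSupp R (N'' ⧸ L) := dimSupp_le_of_injective lift hinj
      _ < (n : WithBot (WithTop ℕ)) := h₂.1
  · -- second quotient is trivial since `(N ⊔ N') ⊓ N = N`
    have htop : (((N ⊔ N') ⊓ N).comap N.subtype) = ⊤ := by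
      rw [eq_top_iff]
      intro x _
      exact ⟨Submodule.mem_sup_left x.2, x.2⟩
    rw [htop]
    have : Subsingleton (N ⧸ (⊤ : Submodule R N)) :=
      Submodule.Quotient.subsingleton_iff.mpr rfl
    rw [dimSupp_bot_of_subsingleton]
    exact bot_lt_iff_ne_bot.mpr (by simp)
end

section
/- Let N, N', N'' be submodules of M such that N'' ⊆ N' and N'' is n-comparable with N. Then N ∩ N' is n-comparable with N. -/
lemma dimSupp_le_of_surjective {R : Type*} [CommRing R] {P Q : Type*} [AddCommGroup P]
    [Module R P] [AddCommGroup Q] [Module R Q] (f : P →ₗ[R] Q)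
    (hf : Function.Surjective f) : dimSupp R Q ≤ dimSupp R P := by
  have h := Module.support_subset_of_surjective f hf
  exact Order.krullDim_le_of_strictMono (Set.inclusion h) (fun _ _ hab => hab)

lemma dimSupp_lt_of_subsingleton {R : Type*} [CommRing R] {P : Type*} [AddCommGroup P]
    [Module R P] (n : ℕ) (h : Subsingleton P) :
    dimSupp R P < (n : WithBot (WithTop ℕ)) := by
  unfold dimSupp
  rw [Module.support_eq_empty_iff.mpr h]
  have : IsEmpty ((∅ : Set (PrimeSpectrum R)) : Type _) := Set.isEmpty_coe_sort.mpr rfl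
  rw [Order.krullDim_eq_bot]
  exact bot_lt_iff_ne_bot.mpr (by simp)

/-- If `N'' ⊆ N'` and `N''` is `n`-comparable with `N`, then `N ∩ N'` is
`n`-comparable with `N`. -/
theorem nComparable_inf {R : Type*} [CommRing R] {M : Type*} [AddCommGroup M]
    [Module R M] (n : ℕ) (N N' N'' : Submodule R M) (h₁ : N'' ≤ N')
    (h₂ : NComparable n N'' N) : NComparable n (N ⊓ N') N := by
  constructor
  · exact dimSupp_lt_of_subsingleton n
      (Submodule.Quotient.subsingleton_iff.mpr
        (Submodule.comap_subtype_eq_top.mpr (le_inf le_rfl inf_le_left)))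
  · set p := (N'' ⊓ N).comap N.subtype with hp
    set q := (N ⊓ N' ⊓ N).comap N.subtype with hq
    have hle : p ≤ Submodule.comap LinearMap.id q := by
      intro x hx
      simp only [hp, hq, Submodule.mem_comap, Submodule.mem_inf, LinearMap.id_coe, id_eq] at hx ⊢
      exact ⟨⟨hx.2, h₁ hx.1⟩, hx.2⟩
    have hsurj : Function.Surjective (Submodule.mapQ p q LinearMap.id hle) := by
      intro y
      obtain ⟨x, rfl⟩ := Submodule.mkQ_surjective q y
      exact ⟨Submodule.mkQ p x, by simp [Submodule.mapQ_apply]⟩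
    calc dimSupp R (↥N ⧸ q) ≤ dimSupp R (↥N ⧸ p) := dimSupp_le_of_surjective _ hsurj
      _ < n := h₂.2
end

section
/- Let N, N', N'' be submodules of M such that N' ⊆ N'' and N'' is fd-comparable with N. Then N + N' is fd-comparable with N. -/
/-- Two submodules `N₁, N₂` of a module `M` over a (not necessarily commutative)
ring `A` are fd-comparable if both `N₁/(N₁ ⊓ N₂)` and `N₂/(N₁ ⊓ N₂)` have finite
length as `A`-modules. -/
def FdComparable {A : Type*} [Ring A] {M : Type*} [AddCommGroup M] [Module A M]
    (N₁ N₂ : Submodule A M) : Prop :=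
  IsFiniteLength A (N₁ ⧸ ((N₁ ⊓ N₂).comap N₁.subtype)) ∧
  IsFiniteLength A (N₂ ⧸ ((N₁ ⊓ N₂).comap N₂.subtype))

theorem isFiniteLength_of_injective {A : Type*} [Ring A] {M P : Type*}
    [AddCommGroup M] [Module A M] [AddCommGroup P] [Module A P]
    (f : M →ₗ[A] P) (hf : Function.Injective f) (h : IsFiniteLength A P) :
    IsFiniteLength A M := by
  rw [isFiniteLength_iff_isNoetherian_isArtinian] at h ⊢
  obtain ⟨h1, h2⟩ := h
  exact ⟨isNoetherian_of_injective f hf, isArtinian_of_injective f hf⟩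

/-- If `N' ⊆ N''` and `N''` is fd-comparable with `N`, then `N + N'` is
fd-comparable with `N`. -/
theorem fdComparable_sup {A : Type*} [Ring A] {M : Type*} [AddCommGroup M]
    [Module A M] (N N' N'' : Submodule A M) (h₁ : N' ≤ N'')
    (h₂ : FdComparable N'' N) : FdComparable (N ⊔ N') N := by
  have hinf : (N ⊔ N') ⊓ N = N := inf_eq_right.mpr le_sup_left
  constructor
  · rw [hinf]
    -- (N ⊔ N') ⧸ N ≃ N' ⧸ (N' ⊓ N), which embeds into N'' ⧸ (N'' ⊓ N)
    rw [sup_comm]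
    have e := (LinearMap.quotientInfEquivSupQuotient N' N).symm
    set g : (↥N' ⧸ (N' ⊓ N).comap N'.subtype) →ₗ[A]
        (↥N'' ⧸ (N'' ⊓ N).comap N''.subtype) :=
      Submodule.mapQ ((N' ⊓ N).comap N'.subtype)
        ((N'' ⊓ N).comap N''.subtype) (Submodule.inclusion h₁)
        (fun x hx => by
          simp only [Submodule.mem_comap] at hx ⊢
          exact ⟨h₁ hx.1, hx.2⟩) with hg_def
    have hg : Function.Injective g := by
      rw [← LinearMap.ker_eq_bot, hg_def, Submodule.mapQ,
        Submodule.ker_liftQ_eq_bot]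
      intro x hx
      simp only [LinearMap.mem_ker, LinearMap.coe_comp, Function.comp_apply,
        Submodule.mkQ_apply, Submodule.Quotient.mk_eq_zero,
        Submodule.mem_comap] at hx ⊢
      exact ⟨x.2, hx.2⟩
    refine isFiniteLength_of_injective (g.comp e.toLinearMap) ?_ h₂.1
    change Function.Injective (⇑g ∘ ⇑e)
    exact hg.comp e.injective
  · rw [hinf]
    have : ((N : Submodule A M).comap N.subtype) = ⊤ := by
      ext x; simp
    rw [this]
    have : Subsingleton (N ⧸ (⊤ : Submodule A N)) :=
      Submodule.Quotient.subsingleton_iff.mpr rfl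
    exact .of_subsingleton
end

section
/- Let N, N', N'' be submodules of M such that N'' ⊆ N' and N'' is fd-comparable with N. Then N ∩ N' is fd-comparable with N. -/
/-- If `N'' ⊆ N'` and `N''` is fd-comparable with `N`, then `N ∩ N'` is
fd-comparable with `N`. -/
theorem fdComparable_inf {A : Type*} [Ring A] {M : Type*} [AddCommGroup M]
    [Module A M] (N N' N'' : Submodule A M) (h₁ : N'' ≤ N')
    (h₂ : FdComparable N'' N) : FdComparable (N ⊓ N') N := by
  obtain ⟨-, h2⟩ := h₂
  constructor
  · have htop : ((N ⊓ N' ⊓ N).comap (N ⊓ N').subtype) = ⊤ := by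
      rw [eq_top_iff]
      intro x _
      exact ⟨x.2, x.2.1⟩
    haveI : Subsingleton ((N ⊓ N' : Submodule A M) ⧸
        ((N ⊓ N' ⊓ N).comap (N ⊓ N').subtype)) := by
      rw [Submodule.Quotient.subsingleton_iff]; exact htop
    exact .of_subsingleton
  · rw [isFiniteLength_iff_isNoetherian_isArtinian] at h2 ⊢
    obtain ⟨hN, hA⟩ := h2
    have hle : ((N'' ⊓ N).comap N.subtype) ≤ ((N ⊓ N' ⊓ N).comap N.subtype) := by
      intro x hx
      simp only [Submodule.mem_comap, Submodule.mem_inf] at hx ⊢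
      exact ⟨⟨hx.2, h₁ hx.1⟩, hx.2⟩
    have hsurj : Function.Surjective
        (Submodule.mapQ _ _ (LinearMap.id) hle :
          (N ⧸ ((N'' ⊓ N).comap N.subtype)) →ₗ[A] (N ⧸ ((N ⊓ N' ⊓ N).comap N.subtype))) := by
      intro x
      obtain ⟨y, rfl⟩ := Submodule.Quotient.mk_surjective _ x
      exact ⟨Submodule.Quotient.mk y, rfl⟩
    exact ⟨isNoetherian_of_surjective _ (LinearMap.range_eq_top.2 hsurj),
      isArtinian_of_surjective _ _ hsurj⟩
end

section
/- Let Q be a submodule of M which is Noetherian as an A-module, and let N ⊆ Q be a submodule. Then the set of submodules P ⊆ Q that are fd-comparable with N has a greatest element, i.e., there exists a submodule P₀ ⊆ Q fd-comparable with N such that every submodule P ⊆ Q fd-comparable with N satisfies P ⊆ P₀. -/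
section Aux

variable {A : Type*} [Ring A]

lemma IsFiniteLength.of_surjective' {M N : Type*} [AddCommGroup M] [Module A M]
    [AddCommGroup N] [Module A N] (f : M →ₗ[A] N) (hf : Function.Surjective f)
    (h : IsFiniteLength A M) : IsFiniteLength A N := by
  rw [isFiniteLength_iff_isNoetherian_isArtinian] at h ⊢
  obtain ⟨h1, h2⟩ := h
  exact ⟨isNoetherian_of_surjective f (LinearMap.range_eq_top.mpr hf),
    isArtinian_of_surjective M f hf⟩

lemma IsFiniteLength.of_injective' {M N : Type*} [AddCommGroup M] [Module A M]
    [AddCommGroup N] [Module A N] (f : M →ₗ[A] N) (hf : Function.Injective f)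
    (h : IsFiniteLength A N) : IsFiniteLength A M := by
  rw [isFiniteLength_iff_isNoetherian_isArtinian] at h ⊢
  obtain ⟨h1, h2⟩ := h
  exact ⟨isNoetherian_of_injective f hf, isArtinian_of_injective f hf⟩

lemma IsFiniteLength.of_range_eq_ker {M N P : Type*} [AddCommGroup M] [Module A M]
    [AddCommGroup N] [Module A N] [AddCommGroup P] [Module A P]
    (f : M →ₗ[A] N) (g : N →ₗ[A] P) (h : LinearMap.range f = LinearMap.ker g)
    (hM : IsFiniteLength A M) (hP : IsFiniteLength A P) : IsFiniteLength A N := by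
  rw [isFiniteLength_iff_isNoetherian_isArtinian] at hM hP ⊢
  obtain ⟨h1, h2⟩ := hM; obtain ⟨h3, h4⟩ := hP
  exact ⟨isNoetherian_of_range_eq_ker f g h, isArtinian_of_range_eq_ker f g h⟩

lemma IsFiniteLength.prod' {M N : Type*} [AddCommGroup M] [Module A M]
    [AddCommGroup N] [Module A N] (hM : IsFiniteLength A M) (hN : IsFiniteLength A N) :
    IsFiniteLength A (M × N) := by
  rw [isFiniteLength_iff_isNoetherian_isArtinian] at hM hN ⊢
  obtain ⟨h1, h2⟩ := hM; obtain ⟨h3, h4⟩ := hN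
  exact ⟨inferInstance, inferInstance⟩

variable {M : Type*} [AddCommGroup M] [Module A M]

/-- The relative finite-length condition: `P / (K ⊓ P)` has finite length. -/
def FL (K P : Submodule A M) : Prop := IsFiniteLength A (P ⧸ (K.comap P.subtype))

lemma FL_congr {K K' P : Submodule A M} (h : K ⊓ P = K' ⊓ P) (hK : FL K P) : FL K' P := by
  have : K.comap P.subtype = K'.comap P.subtype := by
    have h1 : (K ⊓ P).comap P.subtype = (K' ⊓ P).comap P.subtype := by rw [h]
    simpa [Submodule.comap_inf, Submodule.comap_subtype_self] using h1
  rwa [FL, this] at hK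

lemma FL_self (P : Submodule A M) : FL P P := by
  rw [FL, Submodule.comap_subtype_self]
  have : Subsingleton (P ⧸ (⊤ : Submodule A P)) :=
    Submodule.Quotient.subsingleton_iff.mpr rfl
  exact .of_subsingleton

lemma FL_mono {K K' : Submodule A M} (P : Submodule A M) (h : K ≤ K') (hK : FL K P) :
    FL K' P := by
  have hle : K.comap P.subtype ≤ (K'.comap P.subtype).comap LinearMap.id :=
    Submodule.comap_mono h
  refine hK.of_surjective' (Submodule.mapQ _ _ LinearMap.id hle) ?_
  intro x
  obtain ⟨y, rfl⟩ := Submodule.Quotient.mk_surjective _ x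
  exact ⟨Submodule.Quotient.mk y, by simp [Submodule.mapQ_apply]⟩

lemma FL_of_le {K P P' : Submodule A M} (h : P' ≤ P) (hK : FL K P) : FL K P' := by
  set f : P' →ₗ[A] P ⧸ (K.comap P.subtype) :=
    (K.comap P.subtype).mkQ ∘ₗ Submodule.inclusion h with hf
  have hker : LinearMap.ker f = K.comap P'.subtype := by
    ext x
    simp [hf, Submodule.Quotient.mk_eq_zero, Submodule.inclusion, Submodule.mkQ]
  have := Submodule.ker_liftQ_eq_bot (K.comap P'.subtype) f hker.ge hker.le
  exact hK.of_injective' _ (LinearMap.ker_eq_bot.mp this)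

lemma FL_ext {K P P' : Submodule A M} (hKP : K ≤ P) (hPP' : P ≤ P')
    (h1 : FL K P) (h2 : FL P P') : FL K P' := by
  set f0 : P →ₗ[A] P' ⧸ (K.comap P'.subtype) :=
    (K.comap P'.subtype).mkQ ∘ₗ Submodule.inclusion hPP' with hf0
  have hf0ker : K.comap P.subtype ≤ LinearMap.ker f0 := by
    intro x hx
    simpa [hf0, Submodule.Quotient.mk_eq_zero, Submodule.inclusion] using hx
  set f := (K.comap P.subtype).liftQ f0 hf0ker with hfdef
  set g : (P' ⧸ K.comap P'.subtype) →ₗ[A] (P' ⧸ P.comap P'.subtype) :=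
    Submodule.mapQ _ _ LinearMap.id (Submodule.comap_mono hKP) with hg
  have hrk : LinearMap.range f = LinearMap.ker g := by
    ext x
    obtain ⟨y, rfl⟩ := Submodule.Quotient.mk_surjective _ x
    simp only [LinearMap.mem_range, LinearMap.mem_ker]
    constructor
    · rintro ⟨z, hz⟩
      rw [← hz]
      obtain ⟨w, rfl⟩ := Submodule.Quotient.mk_surjective _ z
      simp [hfdef, hf0, hg, Submodule.mapQ_apply, Submodule.Quotient.mk_eq_zero,
        Submodule.inclusion]
    · intro hy
      rw [hg, Submodule.mapQ_apply, Submodule.Quotient.mk_eq_zero] at hy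
      refine ⟨Submodule.Quotient.mk ⟨(y : M), hy⟩, ?_⟩
      rw [hfdef, Submodule.liftQ_apply, hf0]
      exact congrArg Submodule.Quotient.mk (Subtype.ext rfl)
  exact IsFiniteLength.of_range_eq_ker f g hrk h1 h2

lemma FL_sup {K P₁ P₂ : Submodule A M} (h1 : FL K P₁) (h2 : FL K P₂) :
    FL K (P₁ ⊔ P₂) := by
  set f1 : P₁ →ₗ[A] (P₁ ⊔ P₂ : Submodule A M) ⧸ (K.comap (P₁ ⊔ P₂ : Submodule A M).subtype) :=
    (K.comap (P₁ ⊔ P₂ : Submodule A M).subtype).mkQ ∘ₗ Submodule.inclusion le_sup_left with hf1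
  set f2 : P₂ →ₗ[A] (P₁ ⊔ P₂ : Submodule A M) ⧸ (K.comap (P₁ ⊔ P₂ : Submodule A M).subtype) :=
    (K.comap (P₁ ⊔ P₂ : Submodule A M).subtype).mkQ ∘ₗ Submodule.inclusion le_sup_right with hf2
  have hk1 : K.comap P₁.subtype ≤ LinearMap.ker f1 := fun x hx => by
    simpa [hf1, Submodule.Quotient.mk_eq_zero, Submodule.inclusion] using hx
  have hk2 : K.comap P₂.subtype ≤ LinearMap.ker f2 := fun x hx => by
    simpa [hf2, Submodule.Quotient.mk_eq_zero, Submodule.inclusion] using hx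
  set F := ((K.comap P₁.subtype).liftQ f1 hk1).coprod ((K.comap P₂.subtype).liftQ f2 hk2)
    with hF
  refine (h1.prod' h2).of_surjective' F ?_
  intro x
  obtain ⟨y, rfl⟩ := Submodule.Quotient.mk_surjective _ x
  obtain ⟨a, ha, b, hb, hab⟩ := Submodule.mem_sup.mp y.2
  refine ⟨(Submodule.Quotient.mk ⟨a, ha⟩, Submodule.Quotient.mk ⟨b, hb⟩), ?_⟩
  have : Submodule.inclusion (le_sup_left : P₁ ≤ P₁ ⊔ P₂) ⟨a, ha⟩ +
      Submodule.inclusion (le_sup_right : P₂ ≤ P₁ ⊔ P₂) ⟨b, hb⟩ = y := by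
    apply Subtype.ext; simpa [Submodule.inclusion] using hab
  simp [hF, hf1, hf2, ← Submodule.Quotient.mk_add, this]


lemma fdComparable_self (N : Submodule A M) : FdComparable N N := by
  have h : FL (N ⊓ N) N := by rw [inf_idem]; exact FL_self N
  exact ⟨h, h⟩

lemma FdComparable.sup {P₁ P₂ N : Submodule A M} (h1 : FdComparable P₁ N)
    (h2 : FdComparable P₂ N) : FdComparable (P₁ ⊔ P₂) N := by
  obtain ⟨h1a, h1b⟩ := h1
  obtain ⟨h2a, h2b⟩ := h2
  have h1a : FL (P₁ ⊓ N) P₁ := h1a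
  have h1b : FL (P₁ ⊓ N) N := h1b
  have h2a : FL (P₂ ⊓ N) P₂ := h2a
  have h2b : FL (P₂ ⊓ N) N := h2b
  set K := P₁ ⊓ P₂ ⊓ N with hK
  have e1 : FL K (P₁ ⊓ N) := by
    refine FL_congr ?_ (FL_of_le inf_le_right h2b)
    ext x; simp only [Submodule.mem_inf, hK]; tauto
  have e2 : FL K (P₂ ⊓ N) := by
    refine FL_congr ?_ (FL_of_le inf_le_right h1b)
    ext x; simp only [Submodule.mem_inf, hK]; tauto
  have hK1 : K ≤ P₁ ⊓ N := by
    intro x hx; simp only [Submodule.mem_inf, hK] at hx ⊢; tauto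
  have hK2 : K ≤ P₂ ⊓ N := by
    intro x hx; simp only [Submodule.mem_inf, hK] at hx ⊢; tauto
  have f1 : FL K P₁ := FL_ext hK1 inf_le_left e1 h1a
  have f2 : FL K P₂ := FL_ext hK2 inf_le_left e2 h2a
  have fsup : FL K (P₁ ⊔ P₂) := FL_sup f1 f2
  have hKle : K ≤ (P₁ ⊔ P₂) ⊓ N :=
    le_inf ((inf_le_left.trans inf_le_left).trans le_sup_left) inf_le_right
  refine ⟨FL_mono _ hKle fsup, FL_mono _ ?_ h1b⟩
  exact inf_le_inf_right N le_sup_left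

end Aux

/-- If `Q` is a Noetherian submodule of `M` and `N ⊆ Q`, then among the submodules
of `Q` that are fd-comparable with `N` there is a greatest one. -/
theorem exists_greatest_fdComparable {A : Type*} [Ring A] {M : Type*} [AddCommGroup M]
    [Module A M] (Q : Submodule A M) (hQ : IsNoetherian A Q) (N : Submodule A M)
    (hNQ : N ≤ Q) :
    ∃ P₀ : Submodule A M, P₀ ≤ Q ∧ FdComparable P₀ N ∧
      ∀ P : Submodule A M, P ≤ Q → FdComparable P N → P ≤ P₀ := by
  obtain ⟨P₀', hP₀'mem, hmax⟩ := set_has_maximal_iff_noetherian.mpr hQ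
    {P' : Submodule A Q | FdComparable (P'.map Q.subtype) N}
    ⟨N.comap Q.subtype, by
      show FdComparable ((N.comap Q.subtype).map Q.subtype) N
      rw [Submodule.map_comap_subtype, inf_eq_right.mpr hNQ]
      exact fdComparable_self N⟩
  refine ⟨P₀'.map Q.subtype, Submodule.map_subtype_le Q P₀', hP₀'mem, ?_⟩
  intro P hPQ hP
  have hsup : (P.comap Q.subtype ⊔ P₀') ∈
      {P' : Submodule A Q | FdComparable (P'.map Q.subtype) N} := by
    show FdComparable _ N
    rw [Submodule.map_sup, Submodule.map_comap_subtype, inf_eq_right.mpr hPQ]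
    exact hP.sup hP₀'mem
  have hle : P.comap Q.subtype ≤ P₀' :=
    not_not.mp (fun h => hmax _ hsup (right_lt_sup.mpr h))
  calc P = (P.comap Q.subtype).map Q.subtype := by
        rw [Submodule.map_comap_subtype, inf_eq_right.mpr hPQ]
    _ ≤ P₀'.map Q.subtype := Submodule.map_mono hle
end

section
/- Let d ≥ 1 and let (F_i)_{i∈ℤ} be a filtration of V compatible with the ℤ/dℤ-grading such that F_{-1} = 0 and F_{d-1} = V. Then (F_i) is the trivial filtration: F_i = 0 for i < 0, F_i = V_0 + V_1 + ... + V_i (the sum of the components V_j for 0 ≤ j ≤ i) for 0 ≤ i ≤ d−1, and F_i = V for i ≥ d−1. -/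
/-- Lemma 3.10(3): let `V` be a module graded by `ℤ/dℤ` (`d ≥ 1`) and let
`(F i)_{i ∈ ℤ}` be an increasing exhaustive filtration by graded submodules which
is compatible with the grading in the sense that `F i ⊆ F (i-1) + V_{i mod d}`.
If `F (-1) = 0` and `F (d-1) = V`, then `F` is the trivial filtration:
`F i = 0` for `i < 0`, `F i = V_0 + ⋯ + V_i` for `0 ≤ i ≤ d-1`, and `F i = V`
for `i ≥ d-1`. -/
theorem compatible_filtration_trivial
    {R : Type*} [Ring R] {V : Type*} [AddCommGroup V] [Module R V]
    (d : ℕ) (hd : 1 ≤ d)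
    (𝒱 : ZMod d → Submodule R V) [DirectSum.Decomposition 𝒱]
    (F : ℤ → Submodule R V)
    (hmono : Monotone F)
    (hexh : (⨆ i : ℤ, F i) = ⊤)
    (hgraded : ∀ i : ℤ, ∀ v ∈ F i, ∀ a : ZMod d,
      ((DirectSum.decompose 𝒱 v a : 𝒱 a) : V) ∈ F i)
    (hcompat : ∀ i : ℤ, F i ≤ F (i - 1) ⊔ 𝒱 (i : ZMod d))
    (hneg : F (-1) = ⊥)
    (htop : F ((d : ℤ) - 1) = ⊤) :
    (∀ i : ℤ, i < 0 → F i = ⊥) ∧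
    (∀ i : ℤ, 0 ≤ i → i ≤ (d : ℤ) - 1 →
      F i = ⨆ j ∈ Set.Icc (0 : ℤ) i, 𝒱 (j : ZMod d)) ∧
    (∀ i : ℤ, (d : ℤ) - 1 ≤ i → F i = ⊤) := by
  classical
  -- projection onto the `a`-component, as a linear map
  let π : ZMod d → (V →ₗ[R] V) := fun a =>
    (𝒱 a).subtype ∘ₗ (DirectSum.component R (ZMod d) (fun b => ↥(𝒱 b)) a) ∘ₗ
      (DirectSum.decomposeLinearEquiv 𝒱).toLinearMap
  have hπ : ∀ (a : ZMod d) (v : V), π a v = ((DirectSum.decompose 𝒱 v a : 𝒱 a) : V) :=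
    fun a v => rfl
  -- distinct integers in [0, d-1] have distinct casts
  have hcast : ∀ j k : ℤ, 0 ≤ j → j < k → k ≤ (d : ℤ) - 1 → (k : ZMod d) ≠ (j : ZMod d) := by
    intro j k hj hjk hk h
    have hdvd : (d : ℤ) ∣ (k - j) := by
      have := (ZMod.intCast_zmod_eq_zero_iff_dvd (k - j) d).mp (by push_cast; rw [h]; ring)
      exact this
    have h1 : 0 < k - j := by omega
    have h2 : k - j < d := by omega
    have := Int.le_of_dvd h1 hdvd
    omega
  -- upward bound: F i ≤ ⨆_{0 ≤ j ≤ i} 𝒱 j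
  have hupper : ∀ i : ℤ, 0 ≤ i → F i ≤ ⨆ j ∈ Set.Icc (0 : ℤ) i, 𝒱 (j : ZMod d) := by
    refine fun i hi => Int.le_induction (motive := fun i _ => F i ≤ ⨆ j ∈ Set.Icc (0 : ℤ) i, 𝒱 (j : ZMod d)) ?_ ?_ i hi
    ·
      refine (hcompat 0).trans ?_
      have : F (0 - 1) = ⊥ := by norm_num [hneg]
      rw [this, bot_sup_eq]
      exact le_iSup₂_of_le 0 (by simp) le_rfl
    · intro n hn ih
      refine (hcompat (n + 1)).trans ?_
      have h1 : F (n + 1 - 1) ≤ ⨆ j ∈ Set.Icc (0 : ℤ) (n + 1), 𝒱 (j : ZMod d) := by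
        have : F (n + 1 - 1) = F n := by norm_num
        rw [this]
        refine ih.trans (iSup₂_le fun j hj => le_iSup₂_of_le j ?_ le_rfl)
        exact ⟨hj.1, hj.2.trans (by omega)⟩
      have h2 : 𝒱 ((n + 1 : ℤ) : ZMod d) ≤ ⨆ j ∈ Set.Icc (0 : ℤ) (n + 1), 𝒱 (j : ZMod d) :=
        le_iSup₂_of_le (n + 1) ⟨by omega, le_rfl⟩ le_rfl
      exact sup_le h1 h2
  -- downward bound: ⊤ ≤ F i ⊔ ⨆_{i < k ≤ d-1} 𝒱 k
  have hdown : ∀ i : ℤ, i ≤ (d : ℤ) - 1 →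
      (⊤ : Submodule R V) ≤ F i ⊔ ⨆ k ∈ Set.Ioc i ((d : ℤ) - 1), 𝒱 (k : ZMod d) := by
    refine fun i hi => Int.le_induction_down (motive := fun i _ => (⊤ : Submodule R V) ≤ F i ⊔ ⨆ k ∈ Set.Ioc i ((d : ℤ) - 1), 𝒱 (k : ZMod d)) ?_ ?_ i hi
    · exact htop.symm.trans_le le_sup_left
    · intro n hn ih
      refine ih.trans ?_
      have h1 : F n ≤ F (n - 1) ⊔ ⨆ k ∈ Set.Ioc (n - 1) ((d : ℤ) - 1), 𝒱 (k : ZMod d) := by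
        refine (hcompat n).trans (sup_le le_sup_left ?_)
        exact le_sup_of_le_right (le_iSup₂_of_le n ⟨by omega, hn⟩ le_rfl)
      have h2 : (⨆ k ∈ Set.Ioc n ((d : ℤ) - 1), 𝒱 (k : ZMod d)) ≤
          ⨆ k ∈ Set.Ioc (n - 1) ((d : ℤ) - 1), 𝒱 (k : ZMod d) :=
        iSup₂_le fun k hk => le_iSup₂_of_le k ⟨lt_trans (by omega) hk.1, hk.2⟩ le_rfl
      exact sup_le h1 (le_sup_of_le_right h2)
  -- key: 𝒱 j ≤ F j for 0 ≤ j ≤ d - 1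
  have hVF : ∀ j : ℤ, 0 ≤ j → j ≤ (d : ℤ) - 1 → 𝒱 (j : ZMod d) ≤ F j := by
    intro j hj0 hj1 v hv
    have hmem : v ∈ F j ⊔ ⨆ k ∈ Set.Ioc j ((d : ℤ) - 1), 𝒱 (k : ZMod d) :=
      hdown j hj1 Submodule.mem_top
    obtain ⟨w, hw, s, hs, hws⟩ := Submodule.mem_sup.mp hmem
    have hπs : π ((j : ZMod d)) s = 0 := by
      have hker : (⨆ k ∈ Set.Ioc j ((d : ℤ) - 1), 𝒱 (k : ZMod d)) ≤
          LinearMap.ker (π ((j : ZMod d))) := by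
        refine iSup₂_le fun k hk x hx => ?_
        have : ((DirectSum.decompose 𝒱 x ((j : ZMod d)) : 𝒱 ((j : ZMod d))) : V) = 0 :=
          DirectSum.decompose_of_mem_ne 𝒱 hx (hcast j k hj0 hk.1 hk.2)
        simpa [LinearMap.mem_ker, hπ] using this
      exact hker hs
    have hπw : π ((j : ZMod d)) w ∈ F j := by
      rw [hπ]; exact hgraded j w hw _
    have hπv : π ((j : ZMod d)) v = v := by
      rw [hπ]; exact DirectSum.decompose_of_mem_same 𝒱 hv
    have : π ((j : ZMod d)) v = π ((j : ZMod d)) w + π ((j : ZMod d)) s := by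
      rw [← hws, map_add]
    rw [hπv, hπs, add_zero] at this
    rw [this]; exact hπw
  refine ⟨?_, ?_, ?_⟩
  · intro i hi
    have : F i ≤ F (-1) := hmono (by omega)
    rw [hneg] at this
    exact le_bot_iff.mp this
  · intro i hi0 hi1
    refine le_antisymm (hupper i hi0) (iSup₂_le fun j hj => ?_)
    exact (hVF j hj.1 (hj.2.trans hi1)).trans (hmono hj.2)
  · intro i hi
    have : F ((d : ℤ) - 1) ≤ F i := hmono hi
    rw [htop] at this
    exact top_le_iff.mp this
end
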